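/- Let Ω be a topological space, p: Ω → ℝ a non-negative measurable function, and μ, ν finite non-negative Borel measures on Ω such that ∫ p dμ < ∞ and ∫ p dν < ∞. Then there exists a continuous, convex, monotone increasing function ξ: ℝ → [1,∞) with superlinear growth (i.e., ξ(t)/t → ∞ as t → ∞) such that ∫ ξ(p) dμ < ∞, ∫ ξ(p) dν < ∞, and ξ(t) ≥ t for all t ≥ 0. -/

import Mathlib

open MeasureTheory Filter Real

noncomputable def sp (t : ℝ) : ℝ := Real.log (1 + Real.exp t)

lemma one_add_exp_pos (t : ℝ) : (0:ℝ) < 1 + Real.exp t := by positivity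

lemma sp_hasDerivAt (t : ℝ) : HasDerivAt sp (Real.exp t / (1 + Real.exp t)) t :=
  ((Real.hasDerivAt_exp t).const_add 1).log (ne_of_gt (one_add_exp_pos t))

lemma sp_deriv : deriv sp = fun t => Real.exp t / (1 + Real.exp t) :=
  funext fun t => (sp_hasDerivAt t).deriv

lemma sp_strictMono : StrictMono sp :=
  strictMono_of_deriv_pos (by rw [sp_deriv]; intro t; positivity)

lemma sp_deriv2 (t : ℝ) :
    HasDerivAt (fun t => Real.exp t / (1 + Real.exp t)) (Real.exp t / (1 + Real.exp t)^2) t := by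
  have h := (Real.hasDerivAt_exp t).div ((Real.hasDerivAt_exp t).const_add 1)
    (ne_of_gt (one_add_exp_pos t))
  refine h.congr_deriv ?_
  ring

lemma sp_convex : ConvexOn ℝ Set.univ sp := by
  apply convexOn_univ_of_deriv2_nonneg
  · exact fun t => (sp_hasDerivAt t).differentiableAt
  · rw [sp_deriv]; exact fun t => (sp_deriv2 t).differentiableAt
  · intro t
    have : deriv^[2] sp t = Real.exp t / (1 + Real.exp t)^2 := by
      show deriv (deriv sp) t = _
      rw [sp_deriv]; exact (sp_deriv2 t).deriv
    rw [this]; positivity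

lemma sp_continuous : Continuous sp := by
  apply Continuous.log (continuous_const.add Real.continuous_exp)
  exact fun t => ne_of_gt (one_add_exp_pos t)

lemma sp_nonneg (t : ℝ) : 0 ≤ sp t :=
  Real.log_nonneg (by nlinarith [Real.exp_pos t])

lemma le_sp (t : ℝ) : t ≤ sp t := by
  have : Real.exp t ≤ 1 + Real.exp t := by linarith
  calc t = Real.log (Real.exp t) := (Real.log_exp t).symm
  _ ≤ sp t := Real.log_le_log (Real.exp_pos t) this

lemma sp_le (t : ℝ) (ht : 0 ≤ t) : sp t ≤ Real.log 2 + t := by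
  have h1 : (1:ℝ) ≤ Real.exp t := Real.one_le_exp ht
  have : 1 + Real.exp t ≤ 2 * Real.exp t := by linarith
  calc sp t ≤ Real.log (2 * Real.exp t) := Real.log_le_log (one_add_exp_pos t) this
  _ = Real.log 2 + t := by rw [Real.log_mul two_ne_zero (ne_of_gt (Real.exp_pos t)), Real.log_exp]

lemma tail_integrable {Ω : Type*} [MeasurableSpace Ω] {p : Ω → ℝ} (hpm : Measurable p)
    (hp0 : ∀ ω, 0 ≤ p ω) {μ : Measure Ω} (hμ : Integrable p μ) {c : ℝ} (hc : 0 ≤ c) :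
    Integrable (fun ω => max (p ω - c) 0) μ := by
  apply Integrable.mono hμ
    ((hpm.sub measurable_const).max measurable_const).aestronglyMeasurable
  filter_upwards with ω
  rw [Real.norm_eq_abs, Real.norm_eq_abs, abs_of_nonneg (le_max_right _ _),
    abs_of_nonneg (hp0 ω)]
  exact max_le (by simp only [Pi.sub_apply]; linarith [hp0 ω]) (hp0 ω)

lemma tail_tendsto {Ω : Type*} [MeasurableSpace Ω] {p : Ω → ℝ} (hpm : Measurable p)
    (hp0 : ∀ ω, 0 ≤ p ω) (μ : Measure Ω) [IsFiniteMeasure μ] (hμ : Integrable p μ) :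
    Tendsto (fun n : ℕ => ∫ ω, max (p ω - n) 0 ∂μ) atTop (nhds 0) := by
  have h := tendsto_integral_of_dominated_convergence (μ := μ)
      (F := fun (n : ℕ) ω => max (p ω - n) 0) (f := fun _ => (0:ℝ)) p
      (fun n => ((hpm.sub measurable_const).max measurable_const).aestronglyMeasurable)
      hμ ?_ ?_
  · simpa using h
  · intro n
    filter_upwards with ω
    rw [Real.norm_eq_abs, abs_of_nonneg (le_max_right _ _)]
    exact max_le (by linarith [hp0 ω, Nat.cast_nonneg (α := ℝ) n]) (hp0 ω)
  · filter_upwards with ω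
    apply tendsto_atTop_of_eventually_const (i₀ := ⌈p ω⌉₊)
    intro n hn
    have : p ω - n ≤ 0 := by
      have h1 : p ω ≤ (⌈p ω⌉₊ : ℝ) := Nat.le_ceil _
      have h2 : ((⌈p ω⌉₊ : ℝ)) ≤ n := Nat.cast_le.2 hn
      linarith
    exact max_eq_right this

lemma S_summable (a : ℕ → ℝ) (ha : ∀ k : ℕ, (k:ℝ) + 1 ≤ a k) (t : ℝ) :
    Summable (fun k : ℕ => max (t - a k) 0) := by
  apply summable_of_ne_finset_zero (s := Finset.range ⌈t⌉₊)
  intro k hk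
  simp only [Finset.mem_range, not_lt] at hk
  have h1 : t ≤ a k := by
    have h2 : t ≤ (⌈t⌉₊ : ℝ) := Nat.le_ceil t
    have h3 : ((⌈t⌉₊ : ℝ)) ≤ k := Nat.cast_le.2 hk
    linarith [ha k]
  exact max_eq_right (by linarith)

lemma S_convex (a : ℕ → ℝ) (ha : ∀ k : ℕ, (k:ℝ) + 1 ≤ a k) :
    ConvexOn ℝ Set.univ (fun t => ∑' k : ℕ, max (t - a k) 0) := by
  refine ⟨convex_univ, fun x _ y _ α β hα hβ hαβ => ?_⟩
  simp only [smul_eq_mul]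
  have hsx := (S_summable a ha x).mul_left α
  have hsy := (S_summable a ha y).mul_left β
  calc (∑' k : ℕ, max (α * x + β * y - a k) 0)
      ≤ ∑' k : ℕ, (α * max (x - a k) 0 + β * max (y - a k) 0) := by
        apply Summable.tsum_le_tsum _ (S_summable a ha _) (hsx.add hsy)
        intro k
        have h1 : α * x + β * y - a k = α * (x - a k) + β * (y - a k) := by
          have : α * (a k) + β * (a k) = a k := by rw [← add_mul, hαβ, one_mul]
          ring_nf
          linarith [this]
        rw [h1, mul_max_of_nonneg _ _ hα, mul_max_of_nonneg _ _ hβ, mul_zero, mul_zero]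
        exact max_le (add_le_add (le_max_left _ _) (le_max_left _ _))
          (by positivity)
    _ = α * (∑' k : ℕ, max (x - a k) 0) + β * (∑' k : ℕ, max (y - a k) 0) := by
        rw [Summable.tsum_add hsx hsy, tsum_mul_left, tsum_mul_left]

lemma S_integrable {Ω : Type*} [MeasurableSpace Ω] {p : Ω → ℝ} (hpm : Measurable p)
    (hp0 : ∀ ω, 0 ≤ p ω) {μ : Measure Ω} [IsFiniteMeasure μ] (hμ : Integrable p μ)
    (a : ℕ → ℝ) (ha : ∀ k : ℕ, (k:ℝ) + 1 ≤ a k)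
    (hbd : ∀ k, ∫ ω, max (p ω - a k) 0 ∂μ ≤ (1/2)^k)
    (hcont : Continuous (fun t => ∑' k : ℕ, max (t - a k) 0)) :
    Integrable (fun ω => ∑' k : ℕ, max (p ω - a k) 0) μ := by
  have hmeas : AEStronglyMeasurable (fun ω => ∑' k : ℕ, max (p ω - a k) 0) μ :=
    (hcont.measurable.comp hpm).aestronglyMeasurable
  refine ⟨hmeas, ?_⟩
  have hnn : ∀ ω, 0 ≤ ∑' k : ℕ, max (p ω - a k) 0 :=
    fun ω => tsum_nonneg (fun k => le_max_right _ _)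
  rw [hasFiniteIntegral_iff_ofReal (Filter.Eventually.of_forall hnn)]
  have hak : ∀ k, (0:ℝ) ≤ a k := fun k => le_trans (by positivity) (ha k)
  calc (∫⁻ ω, ENNReal.ofReal (∑' k : ℕ, max (p ω - a k) 0) ∂μ)
      = ∫⁻ ω, ∑' k : ℕ, ENNReal.ofReal (max (p ω - a k) 0) ∂μ := by
        apply lintegral_congr
        intro ω
        exact ENNReal.ofReal_tsum_of_nonneg (fun k => le_max_right _ _)
          (S_summable a ha (p ω))
    _ = ∑' k : ℕ, ∫⁻ ω, ENNReal.ofReal (max (p ω - a k) 0) ∂μ := by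
        apply lintegral_tsum
        intro k
        exact ((hpm.sub measurable_const).max measurable_const).ennreal_ofReal.aemeasurable
    _ ≤ ∑' k : ℕ, ENNReal.ofReal ((1/2)^k) := by
        apply ENNReal.tsum_le_tsum
        intro k
        rw [← ofReal_integral_eq_lintegral_ofReal
          (tail_integrable hpm hp0 hμ (hak k))
          (Filter.Eventually.of_forall (fun ω => le_max_right _ _))]
        exact ENNReal.ofReal_le_ofReal (hbd k)
    _ < ⊤ := by
        rw [← ENNReal.ofReal_tsum_of_nonneg (fun k => by positivity) summable_geometric_two]
        exact ENNReal.ofReal_lt_top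

lemma sp_integrable {Ω : Type*} [MeasurableSpace Ω] {p : Ω → ℝ} (hpm : Measurable p)
    (hp0 : ∀ ω, 0 ≤ p ω) {μ : Measure Ω} [IsFiniteMeasure μ] (hμ : Integrable p μ) :
    Integrable (fun ω => sp (p ω)) μ := by
  apply Integrable.mono ((integrable_const (Real.log 2)).add hμ)
    ((sp_continuous.measurable.comp hpm).aestronglyMeasurable)
  filter_upwards with ω
  have h2 : (0:ℝ) ≤ Real.log 2 := Real.log_nonneg one_le_two
  simp only [Function.comp_apply, Pi.add_apply]
  rw [Real.norm_eq_abs, Real.norm_eq_abs, abs_of_nonneg (sp_nonneg _),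
    abs_of_nonneg (by linarith [hp0 ω] : (0:ℝ) ≤ Real.log 2 + p ω)]
  exact sp_le _ (hp0 ω)

/-- de la Vallée-Poussin theorem. -/
theorem dlvp {Ω : Type*} [MeasurableSpace Ω] [TopologicalSpace Ω]
    (p : Ω → ℝ) (hpm : Measurable p) (hp0 : ∀ ω, 0 ≤ p ω)
    (μ ν : Measure Ω) [IsFiniteMeasure μ] [IsFiniteMeasure ν]
    (hμ : Integrable p μ) (hν : Integrable p ν) :
    ∃ ξ : ℝ → ℝ, Continuous ξ ∧ ConvexOn ℝ Set.univ ξ ∧ StrictMono ξ ∧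
      (∀ t, 1 ≤ ξ t) ∧
      Tendsto (fun t => ξ t / t) atTop atTop ∧
      Integrable (fun ω => ξ (p ω)) μ ∧ Integrable (fun ω => ξ (p ω)) ν ∧
      (∀ t, 0 ≤ t → t ≤ ξ t) := by
  -- choose the levels a k
  have hex : ∀ k : ℕ, ∃ c : ℝ, ((k:ℝ) + 1 ≤ c) ∧
      (∫ ω, max (p ω - c) 0 ∂μ ≤ (1/2)^k) ∧ (∫ ω, max (p ω - c) 0 ∂ν ≤ (1/2)^k) := by
    intro k
    have hpos : (0:ℝ) < (1/2)^k := by positivity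
    have h1 := (tail_tendsto hpm hp0 μ hμ).eventually (eventually_le_nhds hpos)
    have h2 := (tail_tendsto hpm hp0 ν hν).eventually (eventually_le_nhds hpos)
    have h3 : ∀ᶠ n : ℕ in atTop, (k:ℝ) + 1 ≤ (n:ℝ) := by
      filter_upwards [eventually_ge_atTop (k+1)] with n hn
      exact_mod_cast Nat.cast_le.2 hn
    obtain ⟨n, hn1, hn2, hn3⟩ := (h3.and (h1.and h2)).exists
    exact ⟨n, hn1, hn2, hn3⟩
  choose a ha1 haμ haν using hex
  have hsum := S_summable a ha1
  have hSconv := S_convex a ha1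
  have hScont : Continuous (fun t => ∑' k : ℕ, max (t - a k) 0) :=
    continuousOn_univ.mp (hSconv.continuousOn isOpen_univ)
  have hS0 : ∀ t, 0 ≤ ∑' k : ℕ, max (t - a k) 0 :=
    fun t => tsum_nonneg (fun k => le_max_right _ _)
  have hSmono : Monotone (fun t => ∑' k : ℕ, max (t - a k) 0) := by
    intro x y hxy
    exact Summable.tsum_le_tsum (fun k => max_le_max (by linarith) le_rfl) (hsum x) (hsum y)
  refine ⟨fun t => 1 + sp t + ∑' k : ℕ, max (t - a k) 0, ?_, ?_, ?_, ?_, ?_, ?_, ?_, ?_⟩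
  · exact (continuous_const.add sp_continuous).add hScont
  · exact ((convexOn_const 1 convex_univ).add sp_convex).add hSconv
  · intro x y hxy
    have h1 := sp_strictMono hxy
    have h2 := hSmono hxy.le
    dsimp only
    linarith
  · intro t
    have := sp_nonneg t
    have := hS0 t
    dsimp only
    linarith
  · rw [tendsto_atTop]
    intro C
    set K : ℕ := ⌈C⌉₊ + 1 with hK
    set A : ℝ := ∑ k ∈ Finset.range K, a k with hA
    have hak : ∀ k : ℕ, (0:ℝ) ≤ a k := fun k => le_trans (by positivity) (ha1 k)
    have hA0 : 0 ≤ A := Finset.sum_nonneg (fun k _ => hak k)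
    filter_upwards [eventually_ge_atTop (max ((K:ℝ) * A) 1)] with t ht
    have ht1 : 1 ≤ t := le_trans (le_max_right _ _) ht
    have ht2 : (K:ℝ) * A ≤ t := le_trans (le_max_left _ _) ht
    have hKC : C + 1 ≤ (K:ℝ) := by
      have := Nat.le_ceil C
      have : (⌈C⌉₊:ℝ) + 1 = (K:ℝ) := by push_cast [hK]; ring
      push_cast
      linarith [Nat.le_ceil C]
    have hK1 : (1:ℝ) ≤ (K:ℝ) := by
      have : (1:ℕ) ≤ K := by omega
      exact_mod_cast this
    have hsum1 : ∑ k ∈ Finset.range K, (t - a k) ≤ ∑ k ∈ Finset.range K, max (t - a k) 0 :=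
      Finset.sum_le_sum (fun k _ => le_max_left _ _)
    have hsum2 : ∑ k ∈ Finset.range K, max (t - a k) 0 ≤ ∑' k : ℕ, max (t - a k) 0 :=
      Summable.sum_le_tsum _ (fun k _ => le_max_right _ _) (hsum t)
    have hsum3 : ∑ k ∈ Finset.range K, (t - a k) = (K:ℝ) * t - A := by
      rw [Finset.sum_sub_distrib, Finset.sum_const, Finset.card_range, nsmul_eq_mul, hA]
    have h1 : (K:ℝ) * t - A ≤ ∑' k : ℕ, max (t - a k) 0 := by rw [← hsum3]; linarith
    have h2 : (0:ℝ) ≤ 1 + sp t := by linarith [sp_nonneg t]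
    have hprod : 0 ≤ ((K:ℝ) - C - 1) * t := mul_nonneg (by linarith) (by linarith)
    have hprod2 : 0 ≤ ((K:ℝ) - 1) * A := mul_nonneg (by linarith) hA0
    have hACt : A ≤ (K:ℝ) * t - C * t := by nlinarith [hprod, hprod2, ht2]
    rw [le_div_iff₀ (by linarith : (0:ℝ) < t)]
    linarith
  · exact ((integrable_const 1).add (sp_integrable hpm hp0 hμ)).add
      (S_integrable hpm hp0 hμ a ha1 haμ hScont)
  · exact ((integrable_const 1).add (sp_integrable hpm hp0 hν)).add
      (S_integrable hpm hp0 hν a ha1 haν hScont)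
  · intro t ht
    have := le_sp t
    have := hS0 t
    dsimp only
    linarith
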